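/- arXiv:1911.08336 — 7 statements merged into one kernel-verified Lean document; each statement's English description precedes it below -/
import Mathlib

section
/- Let H be a real inner product space, let L : H → H be a symmetric linear map (⟪L x, y⟫ = ⟪x, L y⟫ for all x, y), let G : H → H be a linear map, and let δt > 0. Suppose φ⁰, φ¹, μ, w ∈ H and η, a⁰, a¹ ∈ ℝ satisfy the Crank–Nicolson Lagrange-multiplier scheme: (i) φ¹ − φ⁰ = −δt • G μ; (ii) μ = L(½(φ¹ + φ⁰)) + η • w; (iii) a¹ − a⁰ = η · ⟪w, φ¹ − φ⁰⟫. Then the discrete energy law holds: (½⟪L φ¹, φ¹⟫ + a¹) − (½⟪L φ⁰, φ⁰⟫ + a⁰) = −δt · ⟪G μ, μ⟫. -/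
open scoped RealInnerProductSpace

/-- Discrete energy law for the Crank–Nicolson Lagrange-multiplier scheme. -/
theorem cn_lagrange_energy_law
    {H : Type*} [NormedAddCommGroup H] [InnerProductSpace ℝ H]
    (L G : H →ₗ[ℝ] H) (hL : ∀ x y : H, ⟪L x, y⟫ = ⟪x, L y⟫)
    (δt : ℝ) (hδt : 0 < δt)
    (φ0 φ1 μ w : H) (η a0 a1 : ℝ)
    (h1 : φ1 - φ0 = -(δt • G μ))
    (h2 : μ = L ((1 / 2 : ℝ) • (φ1 + φ0)) + η • w)
    (h3 : a1 - a0 = η * ⟪w, φ1 - φ0⟫) :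
    ((1 / 2 : ℝ) * ⟪L φ1, φ1⟫ + a1) - ((1 / 2 : ℝ) * ⟪L φ0, φ0⟫ + a0)
      = -(δt * ⟪G μ, μ⟫) := by
  have e1 : ⟪μ, φ1 - φ0⟫ = -(δt * ⟪G μ, μ⟫) := by
    rw [h1, inner_neg_right, real_inner_smul_right, real_inner_comm]
  have cross : ⟪L φ0, φ1⟫ = ⟪L φ1, φ0⟫ := by
    rw [hL, real_inner_comm]
  have e2 : ⟪μ, φ1 - φ0⟫ = (1 / 2) * (⟪L φ1, φ1⟫ - ⟪L φ0, φ0⟫) + (a1 - a0) := by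
    rw [h2, h3]
    simp only [inner_add_left, real_inner_smul_left, map_smul, map_add,
      inner_smul_left, LinearMap.map_add, inner_sub_right, inner_add_left,
      RCLike.re_to_real, conj_trivial]
    have h01 : ⟪L φ0, φ1⟫ = ⟪L φ1, φ0⟫ := cross
    ring_nf
    linarith [cross]
  linarith [e1, e2]
end

section
/- Let H be a real inner product space, let L : H → H be a symmetric linear map (⟪L x, y⟫ = ⟪x, L y⟫ for all x, y), let G : H → H be a linear map, and let δt > 0. Suppose φ⁰, φ¹, φ², μ, w ∈ H and η, a⁰, a¹, a² ∈ ℝ satisfy the BDF2 Lagrange-multiplier scheme: (i) 3φ² − 4φ¹ + φ⁰ = −2δt • G μ; (ii) μ = L φ² + η • w; (iii) 3a² − 4a¹ + a⁰ = η · ⟪w, 3φ² − 4φ¹ + φ⁰⟫. Define the modified energy Ẽ(φ, ψ, a, a′) = ¼(⟪L φ, φ⟫ + ⟪L(2φ − ψ), 2φ − ψ⟫) + ½(3a − a′). Then Ẽ(φ², φ¹, a², a¹) − Ẽ(φ¹, φ⁰, a¹, a⁰) = −δt · ⟪G μ, μ⟫ − ¼ ⟪L(φ² − 2φ¹ + φ⁰),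 φ² − 2φ¹ + φ⁰⟫. -/
open scoped RealInnerProductSpace

/-- Discrete energy law for the BDF2 Lagrange-multiplier scheme. -/
theorem bdf2_lagrange_energy_law
    {H : Type*} [NormedAddCommGroup H] [InnerProductSpace ℝ H]
    (L G : H →ₗ[ℝ] H) (hL : ∀ x y : H, ⟪L x, y⟫ = ⟪x, L y⟫)
    (δt : ℝ) (hδt : 0 < δt)
    (φ0 φ1 φ2 μ w : H) (η a0 a1 a2 : ℝ)
    (h1 : (3 : ℝ) • φ2 - (4 : ℝ) • φ1 + φ0 = -((2 * δt) • G μ))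
    (h2 : μ = L φ2 + η • w)
    (h3 : 3 * a2 - 4 * a1 + a0 = η * ⟪w, (3 : ℝ) • φ2 - (4 : ℝ) • φ1 + φ0⟫)
    (Etilde : H → H → ℝ → ℝ → ℝ)
    (hE : ∀ (φ ψ : H) (a a' : ℝ), Etilde φ ψ a a'
      = (1 / 4 : ℝ) * (⟪L φ, φ⟫ + ⟪L ((2 : ℝ) • φ - ψ), (2 : ℝ) • φ - ψ⟫)
        + (1 / 2 : ℝ) * (3 * a - a')) :
    Etilde φ2 φ1 a2 a1 - Etilde φ1 φ0 a1 a0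
      = -(δt * ⟪G μ, μ⟫)
        - (1 / 4 : ℝ) * ⟪L (φ2 - (2 : ℝ) • φ1 + φ0), φ2 - (2 : ℝ) • φ1 + φ0⟫ := by
  have key : ⟪μ, (3 : ℝ) • φ2 - (4 : ℝ) • φ1 + φ0⟫ = -(2*δt) * ⟪G μ, μ⟫ := by
    rw [h1, inner_neg_right, real_inner_smul_right, real_inner_comm]; ring
  have key2 : ⟪μ, (3 : ℝ) • φ2 - (4 : ℝ) • φ1 + φ0⟫
      = ⟪L φ2, (3 : ℝ) • φ2 - (4 : ℝ) • φ1 + φ0⟫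
        + η * ⟪w, (3 : ℝ) • φ2 - (4 : ℝ) • φ1 + φ0⟫ := by
    rw [h2, inner_add_left, real_inner_smul_left]
  have e12 : ⟪L φ1, φ2⟫ = ⟪L φ2, φ1⟫ := by rw [hL, real_inner_comm]
  have e01 : ⟪L φ0, φ1⟫ = ⟪L φ1, φ0⟫ := by rw [hL, real_inner_comm]
  have e02 : ⟪L φ0, φ2⟫ = ⟪L φ2, φ0⟫ := by rw [hL, real_inner_comm]
  rw [hE, hE]
  simp only [map_smul, map_sub, map_add, inner_add_left, inner_add_right,
    inner_sub_left, inner_sub_right, real_inner_smul_left, real_inner_smul_right] at *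
  linarith [key, key2, h3, e12, e01, e02]
end

section
/- Let H be a real inner product space, let L : H → H be a continuous symmetric linear map (⟪L x, y⟫ = ⟪x, L y⟫ for all x, y), and let G : H → H be a linear map. Suppose φ : ℝ → H and r : ℝ → ℝ are differentiable, w : ℝ → H and η : ℝ → ℝ are arbitrary functions, and μ : ℝ → H, and for every t: (i) φ′(t) = −G(μ(t)); (ii) μ(t) = L(φ(t)) + η(t) • w(t); (iii) r′(t) = η(t) · ⟪w(t), φ′(t)⟫. Then the energy E(t) = ½⟪L(φ(t)), φ(t)⟫ + r(t) is differentiable with E′(t) = −⟪G(μ(t)), μ(t)⟫ for every t. -/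
open scoped RealInnerProductSpace

/-- Energy dissipation law for the continuous Lagrange-multiplier reformulation of a
gradient flow. -/
theorem continuous_lagrange_energy_law
    {H : Type*} [NormedAddCommGroup H] [InnerProductSpace ℝ H]
    (L : H →L[ℝ] H) (hL : ∀ x y : H, ⟪L x, y⟫ = ⟪x, L y⟫)
    (G : H →ₗ[ℝ] H)
    (φ : ℝ → H) (r : ℝ → ℝ) (w : ℝ → H) (η : ℝ → ℝ) (μ : ℝ → H)
    (hφ : Differentiable ℝ φ) (hr : Differentiable ℝ r)
    (h1 : ∀ t, deriv φ t = -(G (μ t)))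
    (h2 : ∀ t, μ t = L (φ t) + η t • w t)
    (h3 : ∀ t, deriv r t = η t * ⟪w t, deriv φ t⟫) :
    ∀ t, HasDerivAt (fun s => (1 / 2 : ℝ) * ⟪L (φ s), φ s⟫ + r s)
      (-⟪G (μ t), μ t⟫) t := by
  intro t
  have hφt : HasDerivAt φ (deriv φ t) t := (hφ t).hasDerivAt
  have hLφ : HasDerivAt (fun s => L (φ s)) (L (deriv φ t)) t :=
    L.hasFDerivAt.comp_hasDerivAt t hφt
  have hinner : HasDerivAt (fun s => ⟪L (φ s), φ s⟫)
      (⟪L (φ t), deriv φ t⟫ + ⟪L (deriv φ t), φ t⟫) t := hLφ.inner ℝ hφt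
  have hE : HasDerivAt (fun s => (1 / 2 : ℝ) * ⟪L (φ s), φ s⟫ + r s)
      ((1 / 2 : ℝ) * (⟪L (φ t), deriv φ t⟫ + ⟪L (deriv φ t), φ t⟫) + deriv r t) t :=
    (hinner.const_mul _).add (hr t).hasDerivAt
  convert hE using 1
  have hsym : ⟪L (deriv φ t), φ t⟫ = ⟪L (φ t), deriv φ t⟫ := by
    rw [hL, real_inner_comm]
  rw [hsym, h3]
  ring_nf
  have : ⟪L (φ t), deriv φ t⟫ + η t * ⟪w t, deriv φ t⟫ = ⟪μ t, deriv φ t⟫ := by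
    rw [h2, inner_add_left, real_inner_smul_left]
  have h4 : -⟪G (μ t), μ t⟫ = ⟪μ t, deriv φ t⟫ := by
    rw [h1, inner_neg_right, real_inner_comm]
  rw [h4, ← this]
end

section
/- Let H be a real inner product space and let D, N : H → H be symmetric linear maps (⟪D x, y⟫ = ⟪x, D y⟫ and ⟪N x, y⟫ = ⟪x, N y⟫ for all x, y) that are positive semidefinite (⟪D x, x⟫ ≥ 0 and ⟪N x, x⟫ ≥ 0 for all x). Let δt > 0, M_u, M_v > 0, ε_u, ε_v ∈ ℝ, σ ≥ 0, and c ∈ H. Suppose u⁰, u¹, u², v⁰, v¹, v², μ_u, μ_v, w_u, w_v ∈ H and η, W⁰, W¹, W² ∈ ℝ satisfy: (i) 3u² − 4u¹ + u⁰ = −2δt M_u • D μ_u; (ii) μ_u = ε_u² • D u² + η • w_u; (iii) 3v² − 4v¹ + v⁰ = −2δt M_v • D μ_v; (iv) μ_v = ε_v² • D v² + η • w_v + σ • N(v² − c); (v) 3W² − 4W¹ + W⁰ = η (⟪w_u, 3u² − 4u¹ + u⁰⟫ + ⟪w_v, 3v² − 4v¹ + v⁰⟫). For indices (a,b) ∈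 {(2,1),(1,0)} define the discrete energy E^{a,b} = (ε_u²/4)(⟪D u^a, u^a⟫ + ⟪D(2u^a − u^b), 2u^a − u^b⟫) + (ε_v²/4)(⟪D v^a, v^a⟫ + ⟪D(2v^a − v^b), 2v^a − v^b⟫) + (σ/4)(⟪N(v^a − c), v^a − c⟫ + ⟪N(2v^a − v^b − c), 2v^a − v^b − c⟫) + ½(3W^a − W^b). Then E^{2,1} − E^{1,0} ≤ −δt (M_u ⟪D μ_u, μ_u⟫ + M_v ⟪D μ_v, μ_v⟫). -/
open scoped RealInnerProductSpace


lemma bdf2_key {H : Type*} [NormedAddCommGroup H] [InnerProductSpace ℝ H]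
    (T : H →ₗ[ℝ] H) (hT : ∀ x y : H, ⟪T x, y⟫ = ⟪x, T y⟫) (a b d : H) :
    2 * ⟪T a, (3 : ℝ) • a - (4 : ℝ) • b + d⟫
      = (⟪T a, a⟫ + ⟪T ((2 : ℝ) • a - b), (2 : ℝ) • a - b⟫)
        - (⟪T b, b⟫ + ⟪T ((2 : ℝ) • b - d), (2 : ℝ) • b - d⟫)
        + ⟪T (a - (2 : ℝ) • b + d), a - (2 : ℝ) • b + d⟫ := by
  have hT' : ∀ x y : H, ⟪T x, y⟫ = ⟪T y, x⟫ := fun x y =>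
    (hT x y).trans (real_inner_comm _ _)
  simp only [map_add, map_sub, map_smul, inner_add_left, inner_add_right,
    inner_sub_left, inner_sub_right, real_inner_smul_left, real_inner_smul_right]
  linear_combination (-4 : ℝ) * hT' a b + hT' a d

/-- Unconditional energy stability of the BDF2 Lagrange-multiplier scheme for the
coupled non-local Cahn–Hilliard (block copolymer) system. -/
theorem coupled_bdf2_energy_stability
    {H : Type*} [NormedAddCommGroup H] [InnerProductSpace ℝ H]
    (D N : H →ₗ[ℝ] H)
    (hD : ∀ x y : H, ⟪D x, y⟫ = ⟪x, D y⟫) (hN : ∀ x y : H, ⟪N x, y⟫ = ⟪x, N y⟫)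
    (hDpos : ∀ x : H, 0 ≤ ⟪D x, x⟫) (hNpos : ∀ x : H, 0 ≤ ⟪N x, x⟫)
    (δt Mu Mv εu εv σ : ℝ) (hδt : 0 < δt) (hMu : 0 < Mu) (hMv : 0 < Mv) (hσ : 0 ≤ σ)
    (c : H)
    (u0 u1 u2 v0 v1 v2 μu μv wu wv : H) (η W0 W1 W2 : ℝ)
    (h1 : (3 : ℝ) • u2 - (4 : ℝ) • u1 + u0 = -((2 * δt * Mu) • D μu))
    (h2 : μu = εu ^ 2 • D u2 + η • wu)
    (h3 : (3 : ℝ) • v2 - (4 : ℝ) • v1 + v0 = -((2 * δt * Mv) • D μv))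
    (h4 : μv = εv ^ 2 • D v2 + η • wv + σ • N (v2 - c))
    (h5 : 3 * W2 - 4 * W1 + W0
      = η * (⟪wu, (3 : ℝ) • u2 - (4 : ℝ) • u1 + u0⟫
           + ⟪wv, (3 : ℝ) • v2 - (4 : ℝ) • v1 + v0⟫))
    (E : H → H → H → H → ℝ → ℝ → ℝ)
    (hE : ∀ (ua ub va vb : H) (Wa Wb : ℝ), E ua ub va vb Wa Wb
      = εu ^ 2 / 4 * (⟪D ua, ua⟫ + ⟪D ((2 : ℝ) • ua - ub), (2 : ℝ) • ua - ub⟫)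
        + εv ^ 2 / 4 * (⟪D va, va⟫ + ⟪D ((2 : ℝ) • va - vb), (2 : ℝ) • va - vb⟫)
        + σ / 4 * (⟪N (va - c), va - c⟫
                 + ⟪N ((2 : ℝ) • va - vb - c), (2 : ℝ) • va - vb - c⟫)
        + (1 / 2 : ℝ) * (3 * Wa - Wb)) :
    E u2 u1 v2 v1 W2 W1 - E u1 u0 v1 v0 W1 W0
      ≤ -(δt * (Mu * ⟪D μu, μu⟫ + Mv * ⟪D μv, μv⟫)) := by
  have keyu := bdf2_key D hD u2 u1 u0
  have keyv := bdf2_key D hD v2 v1 v0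
  have keyn := bdf2_key N hN (v2 - c) (v1 - c) (v0 - c)
  have a1 : (3:ℝ) • (v2-c) - (4:ℝ) • (v1-c) + (v0-c) = (3:ℝ) • v2 - (4:ℝ) • v1 + v0 := by
    module
  have a2 : (2:ℝ) • (v2-c) - (v1-c) = (2:ℝ) • v2 - v1 - c := by module
  have a3 : (2:ℝ) • (v1-c) - (v0-c) = (2:ℝ) • v1 - v0 - c := by module
  have a4 : (v2-c) - (2:ℝ) • (v1-c) + (v0-c) = v2 - (2:ℝ) • v1 + v0 := by module
  rw [a1, a2, a3, a4] at keyn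
  have eu : εu^2 * ⟪D u2, (3:ℝ)•u2-(4:ℝ)•u1+u0⟫ + η * ⟪wu, (3:ℝ)•u2-(4:ℝ)•u1+u0⟫
      = -((2*δt*Mu) * ⟪D μu, μu⟫) := by
    have l : ⟪μu, (3:ℝ)•u2-(4:ℝ)•u1+u0⟫ = -((2*δt*Mu) * ⟪D μu, μu⟫) := by
      rw [h1, inner_neg_right, real_inner_smul_right, real_inner_comm]
    rw [← l, h2]
    simp [inner_add_left, real_inner_smul_left]
  have ev : εv^2 * ⟪D v2, (3:ℝ)•v2-(4:ℝ)•v1+v0⟫ + η * ⟪wv, (3:ℝ)•v2-(4:ℝ)•v1+v0⟫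
      + σ * ⟪N (v2 - c), (3:ℝ)•v2-(4:ℝ)•v1+v0⟫
      = -((2*δt*Mv) * ⟪D μv, μv⟫) := by
    have l : ⟪μv, (3:ℝ)•v2-(4:ℝ)•v1+v0⟫ = -((2*δt*Mv) * ⟪D μv, μv⟫) := by
      rw [h3, inner_neg_right, real_inner_smul_right, real_inner_comm]
    rw [← l, h4]
    simp [inner_add_left, real_inner_smul_left]
  have hRu : 0 ≤ εu^2/4 * ⟪D (u2 - (2:ℝ)•u1 + u0), u2 - (2:ℝ)•u1 + u0⟫ :=
    mul_nonneg (by positivity) (hDpos _)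
  have hRv : 0 ≤ εv^2/4 * ⟪D (v2 - (2:ℝ)•v1 + v0), v2 - (2:ℝ)•v1 + v0⟫ :=
    mul_nonneg (by positivity) (hDpos _)
  have hRn : 0 ≤ σ/4 * ⟪N (v2 - (2:ℝ)•v1 + v0), v2 - (2:ℝ)•v1 + v0⟫ :=
    mul_nonneg (by positivity) (hNpos _)
  have main : E u2 u1 v2 v1 W2 W1 - E u1 u0 v1 v0 W1 W0
      = -(δt * (Mu * ⟪D μu, μu⟫ + Mv * ⟪D μv, μv⟫))
        - (εu^2/4 * ⟪D (u2 - (2:ℝ)•u1 + u0), u2 - (2:ℝ)•u1 + u0⟫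
          + εv^2/4 * ⟪D (v2 - (2:ℝ)•v1 + v0), v2 - (2:ℝ)•v1 + v0⟫
          + σ/4 * ⟪N (v2 - (2:ℝ)•v1 + v0), v2 - (2:ℝ)•v1 + v0⟫) := by
    rw [hE, hE]
    linear_combination (-εu^2/4) * keyu + (-εv^2/4) * keyv + (-σ/4) * keyn
      + (1/2) * eu + (1/2) * ev + (1/2) * h5
  rw [main]
  linarith
end

section
/- Let H be a real inner product space and let D, N : H → H be symmetric linear maps (⟪D x, y⟫ = ⟪x, D y⟫ and ⟪N x, y⟫ = ⟪x, N y⟫ for all x, y). Let δt > 0, M_u, M_v > 0, ε_u, ε_v ∈ ℝ, σ ∈ ℝ, S_u, S_v ∈ ℝ, and c ∈ H. Suppose u⁰, u¹, v⁰, v¹, μ_u, μ_v, w_u, w_v ∈ H and η, W̃⁰, W̃¹ ∈ ℝ satisfy the stabilized Crank–Nicolson scheme with step δt: (i) u¹ − u⁰ = −δt M_u • D μ_u; (ii) μ_u = ε_u² • D(½(u¹+u⁰)) + S_u • (½(u¹+u⁰)) + η • w_u; (iii) v¹ − v⁰ = −δt M_v • D μ_v; (iv) μ_v = ε_v² • D(½(v¹+v⁰))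 + S_v • (½(v¹+v⁰)) + η • w_v + σ • N(½(v¹+v⁰) − c); (v) W̃¹ − W̃⁰ = η (⟪w_u, u¹ − u⁰⟫ + ⟪w_v, v¹ − v⁰⟫). For i ∈ {0,1} define Eⁱ = (ε_u²/2)⟪D uⁱ, uⁱ⟫ + (S_u/2)‖uⁱ‖² + (ε_v²/2)⟪D vⁱ, vⁱ⟫ + (S_v/2)‖vⁱ‖² + W̃ⁱ + (σ/2)⟪N(vⁱ − c), vⁱ − c⟫. Then E¹ − E⁰ = −δt (M_u ⟪D μ_u, μ_u⟫ + M_v ⟪D μ_v, μ_v⟫). -/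
open scoped RealInnerProductSpace

lemma sym_polar {H : Type*} [NormedAddCommGroup H] [InnerProductSpace ℝ H]
    (T : H →ₗ[ℝ] H) (hT : ∀ x y : H, ⟪T x, y⟫ = ⟪x, T y⟫) (a b : H) :
    ⟪T a, a⟫ - ⟪T b, b⟫ = 2 * ⟪T ((1 / 2 : ℝ) • (a + b)), a - b⟫ := by
  have h : ⟪T a, b⟫ = ⟪T b, a⟫ := by rw [hT a b, real_inner_comm]
  simp only [map_smul, map_add, real_inner_smul_left, inner_add_left, inner_sub_right]
  rw [h]; ring

/-- Discrete energy law for the stabilized Crank–Nicolson Lagrange-multiplier scheme with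
(possibly variable) time step, for the coupled non-local Cahn–Hilliard system. -/
theorem coupled_cn_energy_law
    {H : Type*} [NormedAddCommGroup H] [InnerProductSpace ℝ H]
    (D N : H →ₗ[ℝ] H)
    (hD : ∀ x y : H, ⟪D x, y⟫ = ⟪x, D y⟫) (hN : ∀ x y : H, ⟪N x, y⟫ = ⟪x, N y⟫)
    (δt Mu Mv εu εv σ Su Sv : ℝ) (hδt : 0 < δt) (hMu : 0 < Mu) (hMv : 0 < Mv)
    (c : H)
    (u0 u1 v0 v1 μu μv wu wv : H) (η W0 W1 : ℝ)
    (h1 : u1 - u0 = -((δt * Mu) • D μu))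
    (h2 : μu = εu ^ 2 • D ((1 / 2 : ℝ) • (u1 + u0)) + Su • ((1 / 2 : ℝ) • (u1 + u0))
      + η • wu)
    (h3 : v1 - v0 = -((δt * Mv) • D μv))
    (h4 : μv = εv ^ 2 • D ((1 / 2 : ℝ) • (v1 + v0)) + Sv • ((1 / 2 : ℝ) • (v1 + v0))
      + η • wv + σ • N ((1 / 2 : ℝ) • (v1 + v0) - c))
    (h5 : W1 - W0 = η * (⟪wu, u1 - u0⟫ + ⟪wv, v1 - v0⟫))
    (E : H → H → ℝ → ℝ)
    (hE : ∀ (u v : H) (W : ℝ), E u v W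
      = εu ^ 2 / 2 * ⟪D u, u⟫ + Su / 2 * ‖u‖ ^ 2
        + εv ^ 2 / 2 * ⟪D v, v⟫ + Sv / 2 * ‖v‖ ^ 2
        + W + σ / 2 * ⟪N (v - c), v - c⟫) :
    E u1 v1 W1 - E u0 v0 W0
      = -(δt * (Mu * ⟪D μu, μu⟫ + Mv * ⟪D μv, μv⟫)) := by
  set mu : H := (1 / 2 : ℝ) • (u1 + u0) with hmu
  set mv : H := (1 / 2 : ℝ) • (v1 + v0) with hmv
  -- polarization identities
  have pD_u : ⟪D u1, u1⟫ - ⟪D u0, u0⟫ = 2 * ⟪D mu, u1 - u0⟫ := sym_polar D hD u1 u0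
  have pD_v : ⟪D v1, v1⟫ - ⟪D v0, v0⟫ = 2 * ⟪D mv, v1 - v0⟫ := sym_polar D hD v1 v0
  have idI : ∀ x y : H, ⟪(LinearMap.id : H →ₗ[ℝ] H) x, y⟫ = ⟪x, (LinearMap.id : H →ₗ[ℝ] H) y⟫ := by
    intro x y; simp
  have pI_u : ⟪u1, u1⟫ - ⟪u0, u0⟫ = 2 * ⟪mu, u1 - u0⟫ := sym_polar LinearMap.id idI u1 u0
  have pI_v : ⟪v1, v1⟫ - ⟪v0, v0⟫ = 2 * ⟪mv, v1 - v0⟫ := sym_polar LinearMap.id idI v1 v0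
  have pN : ⟪N (v1 - c), v1 - c⟫ - ⟪N (v0 - c), v0 - c⟫
      = 2 * ⟪N (mv - c), v1 - v0⟫ := by
    have := sym_polar N hN (v1 - c) (v0 - c)
    have e1 : (1 / 2 : ℝ) • ((v1 - c) + (v0 - c)) = mv - c := by
      rw [hmv]; module
    have e2 : (v1 - c) - (v0 - c) = v1 - v0 := by abel
    rwa [e1, e2] at this
  -- energy difference as midpoint inner products
  have nu1 : ‖u1‖ ^ 2 = ⟪u1, u1⟫ := (real_inner_self_eq_norm_sq u1).symm
  have nu0 : ‖u0‖ ^ 2 = ⟪u0, u0⟫ := (real_inner_self_eq_norm_sq u0).symm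
  have nv1 : ‖v1‖ ^ 2 = ⟪v1, v1⟫ := (real_inner_self_eq_norm_sq v1).symm
  have nv0 : ‖v0‖ ^ 2 = ⟪v0, v0⟫ := (real_inner_self_eq_norm_sq v0).symm
  have hmuin : ⟪μu, u1 - u0⟫
      = εu ^ 2 * ⟪D mu, u1 - u0⟫ + Su * ⟪mu, u1 - u0⟫ + η * ⟪wu, u1 - u0⟫ := by
    rw [h2]
    simp [inner_add_left, inner_smul_left]
  have hmvin : ⟪μv, v1 - v0⟫
      = εv ^ 2 * ⟪D mv, v1 - v0⟫ + Sv * ⟪mv, v1 - v0⟫ + η * ⟪wv, v1 - v0⟫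
        + σ * ⟪N (mv - c), v1 - v0⟫ := by
    rw [h4]
    simp [inner_add_left, inner_smul_left]
  have hstep : E u1 v1 W1 - E u0 v0 W0 = ⟪μu, u1 - u0⟫ + ⟪μv, v1 - v0⟫ := by
    rw [hE, hE, nu1, nu0, nv1, nv0, hmuin, hmvin]
    linear_combination (εu ^ 2 / 2) * pD_u + (Su / 2) * pI_u + (εv ^ 2 / 2) * pD_v + (Sv / 2) * pI_v + (σ / 2) * pN + h5
  rw [hstep, h1, h3]
  rw [inner_neg_right, inner_neg_right, real_inner_smul_right, real_inner_smul_right,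
    real_inner_comm μu (D μu), real_inner_comm μv (D μv)]
  ring
end

section
/- Let H be a real inner product space, let A : H → H be a symmetric positive semidefinite linear map (⟪A x, y⟫ = ⟪x, A y⟫ and ⟪A x, x⟫ ≥ 0 for all x, y), let M > 0 and δt > 0. Suppose φ⁰, φ¹, φ², w ∈ H and η, a⁰, a¹, a² ∈ ℝ satisfy: (i) 3φ² − 4φ¹ + φ⁰ = −2δt M • (A φ² + η • w); (ii) 3a² − 4a¹ + a⁰ = η · ⟪w, 3φ² − 4φ¹ + φ⁰⟫. Define Ẽ(φ, ψ, a, a′) = ¼(⟪A φ, φ⟫ + ⟪A(2φ − ψ), 2φ − ψ⟫) + ½(3a − a′). Then, with μ = A φ² + η • w, one has Ẽ(φ², φ¹, a², a¹) − Ẽ(φ¹, φ⁰, a¹, a⁰) = −δt M ‖μ‖² − ¼⟪A(φ² − 2φ¹ + φ⁰), φ² − 2φ¹ + φ⁰⟫; in particular Ẽ(φ², φ¹, a², a¹) ≤ Ẽ(φ¹, φ⁰, a¹, a⁰), i.e. the scheme is unconditionally energy stable. -/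
open scoped RealInnerProductSpace

/-- Unconditional energy stability of the BDF2 Lagrange-multiplier scheme for the
MBE model without slope selection. -/
theorem mbe_bdf2_energy_stability
    {H : Type*} [NormedAddCommGroup H] [InnerProductSpace ℝ H]
    (A : H →ₗ[ℝ] H) (hA : ∀ x y : H, ⟪A x, y⟫ = ⟪x, A y⟫)
    (hApos : ∀ x : H, 0 ≤ ⟪A x, x⟫)
    (M δt : ℝ) (hM : 0 < M) (hδt : 0 < δt)
    (φ0 φ1 φ2 w : H) (η a0 a1 a2 : ℝ)
    (h1 : (3 : ℝ) • φ2 - (4 : ℝ) • φ1 + φ0 = -((2 * δt * M) • (A φ2 + η • w)))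
    (h2 : 3 * a2 - 4 * a1 + a0 = η * ⟪w, (3 : ℝ) • φ2 - (4 : ℝ) • φ1 + φ0⟫)
    (Etilde : H → H → ℝ → ℝ → ℝ)
    (hE : ∀ (φ ψ : H) (a a' : ℝ), Etilde φ ψ a a'
      = (1 / 4 : ℝ) * (⟪A φ, φ⟫ + ⟪A ((2 : ℝ) • φ - ψ), (2 : ℝ) • φ - ψ⟫)
        + (1 / 2 : ℝ) * (3 * a - a'))
    (μ : H) (hμ : μ = A φ2 + η • w) :
    (Etilde φ2 φ1 a2 a1 - Etilde φ1 φ0 a1 a0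
        = -(δt * M * ‖μ‖ ^ 2)
          - (1 / 4 : ℝ) * ⟪A (φ2 - (2 : ℝ) • φ1 + φ0), φ2 - (2 : ℝ) • φ1 + φ0⟫)
      ∧ Etilde φ2 φ1 a2 a1 ≤ Etilde φ1 φ0 a1 a0 := by
  have hd : (3 : ℝ) • φ2 - (4 : ℝ) • φ1 + φ0 = (-(2 * δt * M)) • μ := by
    rw [h1, hμ, neg_smul]
  have hip : ⟪μ, (3 : ℝ) • φ2 - (4 : ℝ) • φ1 + φ0⟫ = -(2 * δt * M) * ‖μ‖ ^ 2 := by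
    rw [hd, real_inner_smul_right, real_inner_self_eq_norm_sq, sq]
  have hAφ2 : ⟪A φ2, (3 : ℝ) • φ2 - (4 : ℝ) • φ1 + φ0⟫
      = -(2 * δt * M) * ‖μ‖ ^ 2 - (3 * a2 - 4 * a1 + a0) := by
    rw [hμ, inner_add_left, real_inner_smul_left, ← hμ] at hip
    linarith [h2]
  have s12 : ⟪A φ1, φ2⟫ = ⟪A φ2, φ1⟫ := by rw [hA, real_inner_comm]
  have s02 : ⟪A φ0, φ2⟫ = ⟪A φ2, φ0⟫ := by rw [hA, real_inner_comm]
  have s01 : ⟪A φ0, φ1⟫ = ⟪A φ1, φ0⟫ := by rw [hA, real_inner_comm]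
  simp only [inner_add_right, inner_sub_right, real_inner_smul_right] at hAφ2
  have key : Etilde φ2 φ1 a2 a1 - Etilde φ1 φ0 a1 a0
      = -(δt * M * ‖μ‖ ^ 2)
        - (1 / 4 : ℝ) * ⟪A (φ2 - (2 : ℝ) • φ1 + φ0), φ2 - (2 : ℝ) • φ1 + φ0⟫ := by
    simp only [hE, map_sub, map_add, map_smul, inner_sub_left, inner_sub_right,
      inner_add_left, inner_add_right, real_inner_smul_left, real_inner_smul_right,
      smul_eq_mul, s12, s02, s01]
    linarith [hAφ2]
  refine ⟨key, ?_⟩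
  have h1' : 0 ≤ ⟪A (φ2 - (2 : ℝ) • φ1 + φ0), φ2 - (2 : ℝ) • φ1 + φ0⟫ := hApos _
  have h2' : 0 ≤ δt * M * ‖μ‖ ^ 2 := by positivity
  linarith [key]
end

section
/- Let H be a real inner product space and let D, N : H → H be continuous symmetric linear maps (⟪D x, y⟫ = ⟪x, D y⟫ and ⟪N x, y⟫ = ⟪x, N y⟫ for all x, y). Let M_u, M_v, ε_u, ε_v, σ ∈ ℝ and c ∈ H. Suppose u, v : ℝ → H and W : ℝ → ℝ are differentiable, w_u, w_v : ℝ → H and η : ℝ → ℝ are arbitrary, and μ_u, μ_v : ℝ → H satisfy for all t: (i) u′(t) = −M_u • D(μ_u(t)); (ii) μ_u(t) = ε_u² • D(u(t)) + η(t) • w_u(t); (iii) v′(t) = −M_v • D(μ_v(t)); (iv) μ_v(t) = ε_v² • D(v(t)) + η(t) • w_v(t) + σ • N(v(t) − c); (v) W′(t) = η(t)(⟪w_u(t), u′(t)⟫ + ⟪w_v(t), v′(t)⟫). Then the energy E(t) = (ε_u²/2)⟪D u(t), u(t)⟫ + (ε_v²/2)⟪D v(t), v(t)⟫ + W(t) +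 (σ/2)⟪N(v(t) − c), v(t) − c⟫ is differentiable with E′(t) = −M_u ⟪D μ_u(t), μ_u(t)⟫ − M_v ⟪D μ_v(t), μ_v(t)⟫ for all t. -/
open scoped RealInnerProductSpace

/-- Energy dissipation law for the continuous Lagrange-multiplier reformulation of the
coupled non-local Cahn–Hilliard block copolymer system. -/
theorem coupled_continuous_energy_law
    {H : Type*} [NormedAddCommGroup H] [InnerProductSpace ℝ H]
    (D N : H →L[ℝ] H)
    (hD : ∀ x y : H, ⟪D x, y⟫ = ⟪x, D y⟫) (hN : ∀ x y : H, ⟪N x, y⟫ = ⟪x, N y⟫)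
    (Mu Mv εu εv σ : ℝ) (c : H)
    (u v : ℝ → H) (W : ℝ → ℝ)
    (hu : Differentiable ℝ u) (hv : Differentiable ℝ v) (hW : Differentiable ℝ W)
    (wu wv : ℝ → H) (η : ℝ → ℝ) (μu μv : ℝ → H)
    (h1 : ∀ t, deriv u t = -(Mu • D (μu t)))
    (h2 : ∀ t, μu t = εu ^ 2 • D (u t) + η t • wu t)
    (h3 : ∀ t, deriv v t = -(Mv • D (μv t)))
    (h4 : ∀ t, μv t = εv ^ 2 • D (v t) + η t • wv t + σ • N (v t - c))
    (h5 : ∀ t, deriv W t = η t * (⟪wu t, deriv u t⟫ + ⟪wv t, deriv v t⟫)) :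
    ∀ t, HasDerivAt
      (fun s => εu ^ 2 / 2 * ⟪D (u s), u s⟫ + εv ^ 2 / 2 * ⟪D (v s), v s⟫
        + W s + σ / 2 * ⟪N (v s - c), v s - c⟫)
      (-(Mu * ⟪D (μu t), μu t⟫) - Mv * ⟪D (μv t), μv t⟫) t := by
  intro t
  set u' := deriv u t with hu'def
  set v' := deriv v t with hv'def
  have hut : HasDerivAt u u' t := (hu t).hasDerivAt
  have hvt : HasDerivAt v v' t := (hv t).hasDerivAt
  have hWt : HasDerivAt W (deriv W t) t := (hW t).hasDerivAt
  have hvc : HasDerivAt (fun s => v s - c) v' t := hvt.sub_const c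
  have hDu : HasDerivAt (fun s => D (u s)) (D u') t :=
    D.hasFDerivAt.comp_hasDerivAt t hut
  have hDv : HasDerivAt (fun s => D (v s)) (D v') t :=
    D.hasFDerivAt.comp_hasDerivAt t hvt
  have hNvc : HasDerivAt (fun s => N (v s - c)) (N v') t :=
    N.hasFDerivAt.comp_hasDerivAt t hvc
  have hI1 : HasDerivAt (fun s => ⟪D (u s), u s⟫)
      (⟪D (u t), u'⟫ + ⟪D u', u t⟫) t := hDu.inner ℝ hut
  have hI2 : HasDerivAt (fun s => ⟪D (v s), v s⟫)
      (⟪D (v t), v'⟫ + ⟪D v', v t⟫) t := hDv.inner ℝ hvt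
  have hI3 : HasDerivAt (fun s => ⟪N (v s - c), v s - c⟫)
      (⟪N (v t - c), v'⟫ + ⟪N v', v t - c⟫) t := hNvc.inner ℝ hvc
  have htotal := (((hI1.const_mul (εu ^ 2 / 2)).add
      (hI2.const_mul (εv ^ 2 / 2))).add hWt).add (hI3.const_mul (σ / 2))
  convert htotal using 1
  case e'_4 => rfl
  case e'_5 => rfl
  case e'_8 => rfl
  -- algebra
  have sym1 : ⟪D u', u t⟫ = ⟪D (u t), u'⟫ := by
    rw [hD, real_inner_comm]
  have sym2 : ⟪D v', v t⟫ = ⟪D (v t), v'⟫ := by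
    rw [hD, real_inner_comm]
  have sym3 : ⟪N v', v t - c⟫ = ⟪N (v t - c), v'⟫ := by
    rw [hN, real_inner_comm]
  have keyu : εu ^ 2 * ⟪D (u t), u'⟫ + η t * ⟪wu t, u'⟫
      = -(Mu * ⟪D (μu t), μu t⟫) := by
    have : ⟪μu t, u'⟫ = εu ^ 2 * ⟪D (u t), u'⟫ + η t * ⟪wu t, u'⟫ := by
      rw [h2 t, inner_add_left, real_inner_smul_left, real_inner_smul_left]
    rw [← this, hu'def, h1 t, inner_neg_right, real_inner_smul_right,
      real_inner_comm]
  have keyv : εv ^ 2 * ⟪D (v t), v'⟫ + η t * ⟪wv t, v'⟫ + σ * ⟪N (v t - c), v'⟫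
      = -(Mv * ⟪D (μv t), μv t⟫) := by
    have : ⟪μv t, v'⟫ = εv ^ 2 * ⟪D (v t), v'⟫ + η t * ⟪wv t, v'⟫
        + σ * ⟪N (v t - c), v'⟫ := by
      rw [h4 t, inner_add_left, inner_add_left, real_inner_smul_left,
        real_inner_smul_left, real_inner_smul_left]
    rw [← this, hv'def, h3 t, inner_neg_right, real_inner_smul_right,
      real_inner_comm]
  rw [sym1, sym2, sym3, h5 t, ← hu'def, ← hv'def]
  linarith [keyu, keyv]
end
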